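/- arXiv:0807.4562 — 3 statements merged into one kernel-verified Lean document; each statement's English description precedes it below -/
import Mathlib

section
/- Let A, A₀, B be commutative rings, f : A → A₀ a surjective ring homomorphism whose kernel is a nilpotent ideal, and g : B → A₀ an arbitrary ring homomorphism. Then the second projection q : A ×_{A₀} B → B is surjective and its kernel is a nilpotent ideal; consequently the induced continuous map on prime spectra Spec B → Spec(A ×_{A₀} B) is a homeomorphism. -/
/-- The fiber product ring `A ×_{A₀} B` of `f : A → A₀` and `g : B → A₀`, realized as the
subring of `A × B` of pairs `(a, b)` with `f a = g b`. -/
def ringFiberProduct {A A₀ B : Type*} [CommRing A] [CommRing A₀] [CommRing B]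
    (f : A →+* A₀) (g : B →+* A₀) : Subring (A × B) :=
  RingHom.eqLocus (f.comp (RingHom.fst A B)) (g.comp (RingHom.snd A B))

/-- If `f : A → A₀` is surjective with nilpotent kernel and `g : B → A₀` is
arbitrary, then the second projection `q : A ×_{A₀} B → B` is surjective with nilpotent
kernel, and the induced map `Spec B → Spec (A ×_{A₀} B)` is a homeomorphism. -/
theorem fiberProduct_snd_surjective_nilpotent_kernel_and_spec_homeomorph
    {A A₀ B : Type*} [CommRing A] [CommRing A₀] [CommRing B]
    (f : A →+* A₀) (g : B →+* A₀)
    (hf : Function.Surjective f) (hker : IsNilpotent (RingHom.ker f)) :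
    Function.Surjective ((RingHom.snd A B).comp (ringFiberProduct f g).subtype) ∧
    IsNilpotent (RingHom.ker ((RingHom.snd A B).comp (ringFiberProduct f g).subtype)) ∧
    IsHomeomorph
      (PrimeSpectrum.comap ((RingHom.snd A B).comp (ringFiberProduct f g).subtype)) := by
  set q := (RingHom.snd A B).comp (ringFiberProduct f g).subtype with hq
  have hsurj : Function.Surjective q := by
    intro b
    obtain ⟨a, ha⟩ := hf (g b)
    exact ⟨⟨(a, b), ha⟩, rfl⟩
  obtain ⟨n, hn⟩ := hker
  -- the first projection
  set p := (RingHom.fst A B).comp (ringFiberProduct f g).subtype with hp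
  have hkerle : RingHom.ker q ≤ Ideal.comap p (RingHom.ker f) := by
    intro x hx
    have hx' : (x : A × B).2 = 0 := hx
    have hx2 : f (x : A × B).1 = g (x : A × B).2 := x.2
    simp only [Ideal.mem_comap, RingHom.mem_ker]
    show f (x : A × B).1 = 0
    rw [hx2, hx', map_zero]
  have hnil : IsNilpotent (RingHom.ker q) := by
    refine ⟨n + 1, ?_⟩
    refine eq_bot_iff.mpr fun x hx => ?_
    have hx1 : x ∈ RingHom.ker q := by
      have : (RingHom.ker q) ^ (n + 1) ≤ RingHom.ker q :=
        Ideal.pow_le_self (Nat.succ_ne_zero n)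
      exact this hx
    have h2 : (x : A × B).2 = 0 := hx1
    have h1 : (x : A × B).1 = 0 := by
      have hmap : p x ∈ Ideal.map p (RingHom.ker q ^ (n + 1)) :=
        Ideal.mem_map_of_mem p hx
      rw [Ideal.map_pow] at hmap
      have hle : Ideal.map p (RingHom.ker q) ≤ RingHom.ker f :=
        Ideal.map_le_iff_le_comap.mpr hkerle
      have : p x ∈ (RingHom.ker f) ^ (n + 1) := Ideal.pow_right_mono hle (n + 1) hmap
      have hzero : (RingHom.ker f) ^ (n + 1) = ⊥ := by
        rw [pow_succ, hn]; exact zero_mul _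
      rw [hzero] at this
      exact Ideal.mem_bot.mp this
    ext <;> simp [h1, h2]
  refine ⟨hsurj, hnil, ?_⟩
  have hce := PrimeSpectrum.isClosedEmbedding_comap_of_surjective _ q hsurj
  have hrange : Set.range (PrimeSpectrum.comap q) = Set.univ := by
    rw [range_comap_of_surjective _ q hsurj]
    refine Set.eq_univ_of_forall fun P => fun x hx => ?_
    have : x ∈ nilradical _ := by
      obtain ⟨m, hm⟩ := hnil
      have hxm : x ^ m ∈ RingHom.ker q ^ m := Ideal.pow_mem_pow hx m
      rw [hm] at hxm
      exact ⟨m, by rwa [Submodule.zero_eq_bot, Ideal.mem_bot] at hxm⟩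
    exact (nilradical_le_prime P.asIdeal) this
  exact isHomeomorph_iff_isEmbedding_surjective.mpr
    ⟨hce.toIsEmbedding, Set.range_eq_univ.mp hrange⟩
end

section
/- Let A be a nontrivial commutative ring, G a finite group, g ∈ G an element of order ν, and λ ∈ A a scalar with λ^ν = 1. Let A[G] be the monoid algebra of G over A, on which g acts A-linearly by left translation (i.e. x ↦ (single g 1) · x, sending the basis vector e_h to e_{gh}). Then the λ-eigenspace { x ∈ A[G] : g · x = λ • x } is a direct summand of A[G] as an A-module and is a free A-module of rank |G|/ν. -/
section aux
variable {A : Type*} [CommRing A] {G : Type*} [Group G] [Fintype G] {Q : Type*}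

noncomputable def SmapAux (coef : G → A) (cls : G → Q) : (Q → A) →ₗ[A] MonoidAlgebra A G :=
  (MonoidAlgebra.coeffLinearEquiv A).symm.toLinearMap ∘ₗ (Finsupp.linearEquivFunOnFinite A A G).symm.toLinearMap ∘ₗ
    { toFun := fun c h => coef h * c (cls h)
      map_add' := by intros; funext h; simp [mul_add]
      map_smul' := by intros; funext h; simp [mul_left_comm] }

@[simp] lemma SmapAux_apply (coef : G → A) (cls : G → Q) (c : Q → A) (h : G) :
    (SmapAux coef cls c).coeff h = coef h * c (cls h) := rfl

noncomputable def RmapAux (out : Q → G) : MonoidAlgebra A G →ₗ[A] (Q → A) :=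
  (LinearMap.funLeft A A out).comp ((Finsupp.linearEquivFunOnFinite A A G).toLinearMap ∘ₗ (MonoidAlgebra.coeffLinearEquiv A).toLinearMap)

@[simp] lemma RmapAux_apply (out : Q → G) (x : MonoidAlgebra A G) (q : Q) :
    (RmapAux out x) q = x.coeff (out q) := rfl

end aux

/-- Let `A` be a nontrivial commutative ring, `G` a finite group, `g ∈ G`
of order `ν`, and `λ ∈ A` with `λ^ν = 1`.  The `λ`-eigenspace of left translation by `g` on
the monoid algebra `A[G]` (i.e. of left multiplication by `single g 1`) is a direct summand
of `A[G]` as an `A`-module and is free of rank `|G|/ν`. -/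
theorem monoidAlgebra_translation_eigenspace_free
    {A : Type*} [CommRing A] [Nontrivial A] {G : Type*} [Group G] [Fintype G]
    (g : G) (ν : ℕ) (hg : orderOf g = ν) (lam : A) (hlam : lam ^ ν = 1) :
    (∃ N' : Submodule A (MonoidAlgebra A G),
        IsCompl
          (Module.End.eigenspace
            (LinearMap.mulLeft A (MonoidAlgebra.single g (1 : A))) lam) N') ∧
    Module.Free A
      (Module.End.eigenspace
        (LinearMap.mulLeft A (MonoidAlgebra.single g (1 : A))) lam) ∧
    Module.finrank A
      (Module.End.eigenspace
        (LinearMap.mulLeft A (MonoidAlgebra.single g (1 : A))) lam)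
      = Fintype.card G / ν := by
  classical
  have hν : 0 < ν := hg ▸ orderOf_pos g
  set E := Module.End.eigenspace
      (LinearMap.mulLeft A (MonoidAlgebra.single g (1 : A))) lam with hE
  set H := Subgroup.zpowers g with hH
  letI sd : Setoid G := QuotientGroup.rightRel H
  set Q := Quotient sd with hQ
  set cls : G → Q := Quotient.mk sd with hclsdef
  set out : Q → G := Quotient.out with houtdef
  have hout : ∀ q, cls (out q) = q := fun q => Quotient.out_eq q
  have hcls_g : ∀ h : G, cls (g * h) = cls h := by
    intro h
    refine Quotient.sound (QuotientGroup.rightRel_apply.mpr ?_)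
    simpa using Subgroup.inv_mem H (Subgroup.mem_zpowers g)
  -- index function
  have hex : ∀ h : G, ∃ k, k < ν ∧ g ^ k * out (cls h) = h := by
    intro h
    have h1 : Setoid.r (out (cls h)) h := Quotient.mk_out h
    rw [QuotientGroup.rightRel_apply] at h1
    have h2 : h * (out (cls h))⁻¹ ∈ Submonoid.powers g :=
      (orderOf_pos_iff.mp (hg ▸ hν)).mem_powers_iff_mem_zpowers.mpr h1
    obtain ⟨n, hn⟩ := h2
    have hn' : g ^ n = h * (out (cls h))⁻¹ := hn
    refine ⟨n % ν, Nat.mod_lt _ hν, ?_⟩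
    rw [← hg, pow_mod_orderOf, hn']
    group
  set idx : G → ℕ := fun h => (hex h).choose with hidxdef
  have hidx_lt : ∀ h, idx h < ν := fun h => (hex h).choose_spec.1
  have hidx : ∀ h, g ^ idx h * out (cls h) = h := fun h => (hex h).choose_spec.2
  -- membership criterion
  have hsmul : ∀ (a : A) (x : MonoidAlgebra A G) (y : G), (a • x).coeff y = a * x.coeff y :=
    fun _ _ _ => rfl
  have hmulapp : ∀ (x : MonoidAlgebra A G) (y : G),
      (MonoidAlgebra.single g (1 : A) * x).coeff y = x.coeff (g⁻¹ * y) := by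
    intro x y
    rw [MonoidAlgebra.coeff_single_mul_apply, one_mul]
  have memE : ∀ x : MonoidAlgebra A G, x ∈ E ↔ ∀ h : G, x.coeff h = lam * x.coeff (g * h) := by
    intro x
    rw [hE, Module.End.mem_eigenspace_iff, LinearMap.mulLeft_apply]
    constructor
    · intro hx h
      have h1 := DFunLike.congr_fun (congrArg MonoidAlgebra.coeff hx) (g * h)
      rw [hmulapp, hsmul, inv_mul_cancel_left] at h1
      exact h1
    · intro hx
      refine MonoidAlgebra.ext (Finsupp.ext fun y => ?_)
      rw [hmulapp, hsmul]
      have h1 := hx (g⁻¹ * y)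
      rwa [mul_inv_cancel_left] at h1
  -- exponent identities
  have hlam1 : lam ^ ((ν - 1) * (ν - 1)) = lam := by
    rcases Nat.lt_or_ge ν 2 with h2 | h2
    · have hν1 : ν = 1 := by omega
      subst hν1
      have h3 : lam = 1 := by simpa using hlam
      simp [h3]
    · obtain ⟨m, rfl⟩ : ∃ m, ν = m + 2 := ⟨ν - 2, by omega⟩
      have he : (m + 2 - 1) * (m + 2 - 1) = (m + 2) * m + 1 := by
        have h21 : m + 2 - 1 = m + 1 := by omega
        rw [h21]; ring
      rw [he, pow_add, pow_mul, hlam, one_pow, one_mul, pow_one]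
  have hlam2 : ∀ k : ℕ, lam ^ ((ν - 1) * k) = lam * lam ^ ((ν - 1) * (k + 1)) := by
    intro k
    have he : (ν - 1) * (k + 1) + 1 = (ν - 1) * k + ν := by
      obtain ⟨m, rfl⟩ : ∃ m, ν = m + 1 := ⟨ν - 1, by omega⟩
      simp only [Nat.add_sub_cancel]
      ring
    calc lam ^ ((ν - 1) * k) = lam ^ ((ν - 1) * k) * lam ^ ν := by rw [hlam, mul_one]
      _ = lam ^ ((ν - 1) * k + ν) := (pow_add _ _ _).symm
      _ = lam ^ ((ν - 1) * (k + 1) + 1) := by rw [he]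
      _ = lam * lam ^ ((ν - 1) * (k + 1)) := by rw [pow_succ]; ring
  -- index step relation
  have hidx_pow : ∀ h : G, g ^ idx (g * h) = g ^ (idx h + 1) := by
    intro h
    have h1 : g ^ idx (g * h) * out (cls h) = g ^ (idx h + 1) * out (cls h) := by
      rw [← hcls_g h, hidx (g * h), hcls_g h, pow_succ', mul_assoc, hidx h]
    exact mul_right_cancel h1
  have hidx_cases : ∀ h : G, idx (g * h) = idx h + 1 ∨ (idx h + 1 = ν ∧ idx (g * h) = 0) := by
    intro h
    have h1 : idx (g * h) ≡ idx h + 1 [MOD ν] := by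
      rw [← hg]; exact pow_eq_pow_iff_modEq.mp (hidx_pow h)
    have h2 := hidx_lt (g * h)
    have h3 := hidx_lt h
    unfold Nat.ModEq at h1
    rw [Nat.mod_eq_of_lt h2] at h1
    by_cases h4 : idx h + 1 < ν
    · rw [Nat.mod_eq_of_lt h4] at h1; exact Or.inl h1
    · have h5 : idx h + 1 = ν := by omega
      rw [h5, Nat.mod_self] at h1
      exact Or.inr ⟨h5, h1⟩
  -- eigenvector coefficient function
  set coef : G → A := fun h => lam ^ ((ν - 1) * idx h) with hcoefdef
  have hcoef_step : ∀ h : G, coef h = lam * coef (g * h) := by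
    intro h
    rcases hidx_cases h with h1 | ⟨h1, h2⟩
    · rw [hcoefdef]; simp only; rw [h1]; exact hlam2 (idx h)
    · have h3 : idx h = ν - 1 := by omega
      rw [hcoefdef]; simp only; rw [h2, h3, Nat.mul_zero, pow_zero, mul_one]
      exact hlam1
  set S := SmapAux coef cls with hSdef
  set R := RmapAux (A := A) out with hRdef
  -- S lands in E
  have hSE : ∀ c : Q → A, S c ∈ E := by
    intro c
    rw [memE]
    intro h
    rw [hSdef, SmapAux_apply, SmapAux_apply, hcls_g h, ← mul_assoc, ← hcoef_step h]
  -- iteration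
  have hiter : ∀ x : MonoidAlgebra A G, x ∈ E → ∀ (k : ℕ) (h : G),
      x.coeff h = lam ^ k * x.coeff (g ^ k * h) := by
    intro x hx
    rw [memE] at hx
    intro k
    induction k with
    | zero => intro h; simp
    | succ k ih =>
      intro h
      rw [ih h, hx (g ^ k * h)]
      have hgk : g * (g ^ k * h) = g ^ (k + 1) * h := by
        rw [← mul_assoc, ← pow_succ']
      rw [hgk]
      ring
  have hidx_out : ∀ q : Q, idx (out q) = 0 := by
    intro q
    have h1 := hidx (out q)
    rw [hout q] at h1
    have h2 : g ^ idx (out q) = 1 := by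
      have := mul_eq_right.mp h1
      exact this
    have h3 : ν ∣ idx (out q) := by
      rw [← hg]; exact orderOf_dvd_of_pow_eq_one h2
    exact Nat.eq_zero_of_dvd_of_lt h3 (hidx_lt _)
  -- coefficients of an eigenvector
  have hcoefE : ∀ x : MonoidAlgebra A G, x ∈ E → ∀ h : G,
      x.coeff h = coef h * x.coeff (out (cls h)) := by
    intro x hx h
    have h1 : x.coeff (out (cls h)) = lam ^ idx h * x.coeff h := by
      have := hiter x hx (idx h) (out (cls h))
      rwa [hidx h] at this
    rw [h1, ← mul_assoc, hcoefdef]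
    simp only
    rw [← pow_add]
    have he : (ν - 1) * idx h + idx h = ν * idx h := by
      obtain ⟨m, rfl⟩ : ∃ m, ν = m + 1 := ⟨ν - 1, by omega⟩
      simp only [Nat.add_sub_cancel]
      ring
    rw [he, pow_mul, hlam, one_pow, one_mul]
  -- R ∘ S = id
  have hRS : ∀ c : Q → A, R (S c) = c := by
    intro c
    funext q
    rw [hRdef, RmapAux_apply, hSdef, SmapAux_apply, hout q, hcoefdef]
    simp only
    rw [hidx_out q, Nat.mul_zero, pow_zero, one_mul]
  -- S ∘ R = id on E
  have hSR : ∀ x : MonoidAlgebra A G, x ∈ E → S (R x) = x := by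
    intro x hx
    refine MonoidAlgebra.ext (Finsupp.ext fun h => ?_)
    rw [hSdef, SmapAux_apply, hRdef, RmapAux_apply]
    exact (hcoefE x hx h).symm
  -- the projection
  set p : MonoidAlgebra A G →ₗ[A] E :=
    LinearMap.codRestrict E (S ∘ₗ R) (fun x => hSE (R x)) with hpdef
  have hp : ∀ x : E, p x = x := by
    intro x
    apply Subtype.ext
    have : (p x : MonoidAlgebra A G) = S (R (x : MonoidAlgebra A G)) := rfl
    rw [this, hSR x x.2]
  have hcompl := LinearMap.isCompl_of_proj hp
  refine ⟨⟨LinearMap.ker p, hcompl⟩, ?_, ?_⟩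
  all_goals {
    have e : E ≃ₗ[A] (Q → A) :=
      LinearEquiv.ofLinear (R ∘ₗ E.subtype) (LinearMap.codRestrict E S hSE)
        (LinearMap.ext fun c => hRS c)
        (LinearMap.ext fun x => Subtype.ext (hSR x x.2))
    first
    | exact Module.Free.of_equiv e.symm
    | { letI : Fintype Q := Fintype.ofFinite Q
        rw [e.finrank_eq, Module.finrank_pi]
        have h1 : Nat.card G = Nat.card (G ⧸ H) * Nat.card H :=
          Subgroup.card_eq_card_quotient_mul_card_subgroup H
        have h2 : Nat.card H = ν := by rw [hH, Nat.card_zpowers, hg]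
        have h3 : Fintype.card Q = Nat.card (G ⧸ H) := by
          rw [← Nat.card_eq_fintype_card]
          exact Nat.card_congr (QuotientGroup.quotientRightRelEquivQuotientLeftRel H)
        rw [h3, ← Nat.card_eq_fintype_card, h1, h2, Nat.mul_div_cancel _ hν] }
  }
end

section
/- Call a natural transformation η : F ⟶ G between functors from commutative rings to sets locally of finite presentation if for every filtered category J and every functor R : J ⥤ CommRing, the canonical map colim_j F(R_j) → F(colim_j R_j) ×_{G(colim_j R_j)} colim_j G(R_j), induced by the colimit comparison maps, is a bijection. Let F, G, H : CommRing ⥤ Set be functors and η : F ⟶ G, θ : G ⟶ H natural transformations with θ locally of finite presentation. Then η is locally of finite presentation if and only if the composite θ ∘ η : F ⟶ H is locally of finite presentation. -/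
open CategoryTheory CategoryTheory.Limits

universe u

namespace LFP

/-- The canonical comparison map `colim_j F(R_j) → F(colim_j R_j)`. -/
noncomputable def colimitComparison (F : CommRingCat.{u} ⥤ Type u) {J : Type u}
    [SmallCategory J] [IsFiltered J] (R : J ⥤ CommRingCat.{u}) :
    colimit (R ⋙ F) ⟶ F.obj (colimit R) :=
  colimit.desc (R ⋙ F) (F.mapCocone (colimit.cocone R))

/-- The canonical map `colim_j F(R_j) → F(colim R) ×_{G(colim R)} colim_j G(R_j)` induced by
the colimit comparison maps and a natural transformation `η : F ⟶ G`. -/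
noncomputable def comparisonToFiberProduct {F G : CommRingCat.{u} ⥤ Type u} (η : F ⟶ G)
    {J : Type u} [SmallCategory J] [IsFiltered J] (R : J ⥤ CommRingCat.{u}) :
    colimit (R ⋙ F) →
      { p : F.obj (colimit R) × colimit (R ⋙ G) //
          η.app (colimit R) p.1 = colimitComparison G R p.2 } :=
  fun x =>
    ⟨(colimitComparison F R x, colimMap (Functor.whiskerLeft R η) x), by
      have h : colimitComparison F R ≫ η.app (colimit R)
          = colimMap (Functor.whiskerLeft R η) ≫ colimitComparison G R := by
        apply colimit.hom_ext
        intro j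
        simp only [colimitComparison, colimit.ι_desc_assoc, Functor.mapCocone_ι_app,
          Functor.comp_obj, colimit.cocone_ι, ι_colimMap_assoc, Functor.whiskerLeft_app,
          colimit.ι_desc]
        exact η.naturality (colimit.ι R j)
      first
        | exact congrArg (fun f => f x) h
        | simpa using congrArg (fun f => f x) h⟩

/-- A natural transformation `η : F ⟶ G` of set-valued functors on commutative rings is
*locally of finite presentation* if for every filtered category `J` and every functor
`R : J ⥤ CommRing`, the canonical map
`colim_j F(R_j) → F(colim R) ×_{G(colim R)} colim_j G(R_j)` is a bijection. -/
def IsLocallyFinitelyPresented {F G : CommRingCat.{u} ⥤ Type u} (η : F ⟶ G) : Prop :=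
  ∀ (J : Type u) (_ : SmallCategory J) (_ : IsFiltered J) (R : J ⥤ CommRingCat.{u}),
    Function.Bijective (comparisonToFiberProduct η R)

lemma comparison_square {F G : CommRingCat.{u} ⥤ Type u} (η : F ⟶ G)
    {J : Type u} [SmallCategory J] [IsFiltered J] (R : J ⥤ CommRingCat.{u}) :
    colimitComparison F R ≫ η.app (colimit R)
      = colimMap (Functor.whiskerLeft R η) ≫ colimitComparison G R := by
  apply colimit.hom_ext
  intro j
  simp only [colimitComparison, colimit.ι_desc_assoc, Functor.mapCocone_ι_app,
    Functor.comp_obj, colimit.cocone_ι, ι_colimMap_assoc, Functor.whiskerLeft_app, colimit.ι_desc]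
  exact η.naturality (colimit.ι R j)

/-- The map `(x, b) ↦ (x, v b)` from the fiber product for `η` to the one for `η ≫ θ`. -/
noncomputable def fiberProdMap {F G H : CommRingCat.{u} ⥤ Type u} (η : F ⟶ G) (θ : G ⟶ H)
    {J : Type u} [SmallCategory J] [IsFiltered J] (R : J ⥤ CommRingCat.{u}) :
    { p : F.obj (colimit R) × colimit (R ⋙ G) //
        η.app (colimit R) p.1 = colimitComparison G R p.2 } →
    { p : F.obj (colimit R) × colimit (R ⋙ H) //
        (η ≫ θ).app (colimit R) p.1 = colimitComparison H R p.2 } :=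
  fun q =>
    ⟨(q.1.1, colimMap (Functor.whiskerLeft R θ) q.1.2), by
      have h := congrArg (fun f => f q.1.2) (comparison_square θ R)
      simp only [NatTrans.comp_app, types_comp_apply]
      rw [q.2]
      exact h⟩

lemma fiberProdMap_comp {F G H : CommRingCat.{u} ⥤ Type u} (η : F ⟶ G) (θ : G ⟶ H)
    {J : Type u} [SmallCategory J] [IsFiltered J] (R : J ⥤ CommRingCat.{u}) :
    comparisonToFiberProduct (η ≫ θ) R
      = fiberProdMap η θ R ∘ comparisonToFiberProduct η R := by
  funext x
  apply Subtype.ext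
  refine Prod.ext rfl ?_
  show colimMap (Functor.whiskerLeft R (η ≫ θ)) x
      = colimMap (Functor.whiskerLeft R θ) (colimMap (Functor.whiskerLeft R η) x)
  have : colimMap (Functor.whiskerLeft R (η ≫ θ))
      = colimMap (Functor.whiskerLeft R η) ≫ colimMap (Functor.whiskerLeft R θ) := by
    apply colimit.hom_ext
    intro j
    simp [Functor.whiskerLeft_app]
  exact congrArg (fun f => f x) this

lemma fiberProdMap_bijective {F G H : CommRingCat.{u} ⥤ Type u} (η : F ⟶ G) (θ : G ⟶ H)
    {J : Type u} [SmallCategory J] [IsFiltered J] (R : J ⥤ CommRingCat.{u})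
    (hθ : Function.Bijective (comparisonToFiberProduct θ R)) :
    Function.Bijective (fiberProdMap η θ R) := by
  constructor
  · rintro ⟨⟨x, b⟩, hb⟩ ⟨⟨x', b'⟩, hb'⟩ h
    have hx : x = x' := congrArg (fun q => q.1.1) h
    have hv : colimMap (Functor.whiskerLeft R θ) b = colimMap (Functor.whiskerLeft R θ) b' :=
      congrArg (fun q => q.1.2) h
    have hb2 : b = b' := by
      have := hθ.1 (a₁ := b) (a₂ := b')
      apply this
      apply Subtype.ext
      refine Prod.ext ?_ hv
      show colimitComparison G R b = colimitComparison G R b'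
      rw [← hb, ← hb', hx]
    subst hx hb2
    rfl
  · rintro ⟨⟨x, c⟩, hc⟩
    have hc' : θ.app (colimit R) (η.app (colimit R) x) = colimitComparison H R c := hc
    obtain ⟨b, hb⟩ := hθ.2 ⟨(η.app (colimit R) x, c), hc'⟩
    have h1 : colimitComparison G R b = η.app (colimit R) x :=
      congrArg (fun q => q.1.1) hb
    have h2 : colimMap (Functor.whiskerLeft R θ) b = c := congrArg (fun q => q.1.2) hb
    refine ⟨⟨(x, b), h1.symm⟩, ?_⟩
    apply Subtype.ext
    exact Prod.ext rfl h2

end LFP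

open LFP

/-- Let `η : F ⟶ G` and `θ : G ⟶ H` be natural transformations of
set-valued functors on commutative rings, with `θ` locally of finite presentation.  Then
`η` is locally of finite presentation if and only if the composite `θ ∘ η` is. -/
theorem isLocallyFinitelyPresented_comp_iff
    {F G H : CommRingCat.{u} ⥤ Type u} (η : F ⟶ G) (θ : G ⟶ H)
    (hθ : IsLocallyFinitelyPresented θ) :
    IsLocallyFinitelyPresented η ↔ IsLocallyFinitelyPresented (η ≫ θ) := by
  constructor <;> intro h J instJ instF R <;>
    have hψ := fiberProdMap_bijective η θ R (hθ J instJ instF R)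
  · rw [fiberProdMap_comp η θ R]
    exact hψ.comp (h J instJ instF R)
  · have := h J instJ instF R
    rw [fiberProdMap_comp η θ R] at this
    exact (Function.Bijective.of_comp_iff' hψ _).mp this
end
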